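/- arXiv:2101.01589 — 4 statements merged into one kernel-verified Lean document; each statement's English description precedes it below -/
import Mathlib

section
/- Let λ > 0 be real and let a be a nonzero complex number with |arg a| < π/4. Then ∑_{n=1}^∞ e^{−λn²/a²} = (a/2)·√(π/λ) − 1/2 + a·√(π/λ)·∑_{n=1}^∞ e^{−π²n²a²/λ} (the Poisson–Jacobi formula), where both series converge absolutely and √(π/λ) denotes the positive square root. -/
open Real

lemma summable_aux {τ : ℂ} (hτ : 0 < τ.im) :
    Summable fun n : ℕ => ‖Complex.exp (↑π * Complex.I * ((n : ℂ) + 1) ^ 2 * τ)‖ := by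
  have h : rexp (-π * τ.im) < 1 :=
    Real.exp_lt_one_iff.mpr (mul_neg_of_neg_of_pos (neg_lt_zero.mpr Real.pi_pos) hτ)
  have hg := (summable_geometric_of_lt_one (Real.exp_pos _).le h).mul_left (rexp (-π * τ.im))
  refine Summable.of_nonneg_of_le (fun n => norm_nonneg _) (fun n => ?_) hg
  have h2 : ((n : ℤ) + 1).natAbs = n + 1 := by omega
  have h3 := norm_exp_mul_sq_le hτ ((n : ℤ) + 1)
  rw [h2] at h3
  push_cast at h3
  exact h3.trans_eq (pow_succ' _ _)

/-- The Poisson–Jacobi formula: for `λ > 0` and a nonzero complex `a` with `|arg a| < π/4`,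
`∑_{n≥1} e^{-λn²/a²} = (a/2)√(π/λ) - 1/2 + a√(π/λ) ∑_{n≥1} e^{-π²n²a²/λ}`,
both series converging absolutely. -/
theorem poisson_jacobi (lam : ℝ) (hlam : 0 < lam) (a : ℂ) (ha : a ≠ 0)
    (harg : |a.arg| < π / 4) :
    Summable (fun n : ℕ => ‖Complex.exp (-(lam : ℂ) * ((n : ℂ) + 1) ^ 2 / a ^ 2)‖) ∧
    Summable (fun n : ℕ => ‖Complex.exp (-(π : ℂ) ^ 2 * ((n : ℂ) + 1) ^ 2 * a ^ 2 / (lam : ℂ))‖) ∧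
    ∑' n : ℕ, Complex.exp (-(lam : ℂ) * ((n : ℂ) + 1) ^ 2 / a ^ 2)
      = a / 2 * (Real.sqrt (π / lam) : ℂ) - 1 / 2
        + a * (Real.sqrt (π / lam) : ℂ) *
          ∑' n : ℕ, Complex.exp (-(π : ℂ) ^ 2 * ((n : ℂ) + 1) ^ 2 * a ^ 2 / (lam : ℂ)) := by
  have hπ : (0:ℝ) < π := Real.pi_pos
  have hπ' : (π : ℂ) ≠ 0 := by exact_mod_cast hπ.ne'
  have hlamc : (lam : ℂ) ≠ 0 := by exact_mod_cast hlam.ne'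
  have ha2 : a ^ 2 ≠ 0 := pow_ne_zero 2 ha
  -- positivity of re a and re (a^2)
  have hre : 0 < a.re := by
    rcases Complex.abs_arg_lt_pi_div_two_iff.mp (harg.trans (by linarith)) with h | h
    · exact h
    · exact absurd h ha
  have habs : 0 < ‖a‖ := norm_pos_iff.mpr ha
  have harg' := abs_lt.mp harg
  have hcos : 0 < Real.cos (2 * a.arg) :=
    Real.cos_pos_of_mem_Ioo ⟨by linarith, by linarith⟩
  have hre2 : 0 < (a ^ 2).re := by
    have h1 : a.re = ‖a‖ * Real.cos a.arg := by
      rw [Complex.cos_arg ha]; field_simp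
    have h2 : a.im = ‖a‖ * Real.sin a.arg := by
      rw [Complex.sin_arg]; field_simp
    have h3 : (a ^ 2).re = a.re ^ 2 - a.im ^ 2 := by
      simp [pow_two, Complex.mul_re]
    have h4 := (Real.cos_two_mul' a.arg).symm
    rw [h3, h1, h2]
    nlinarith [mul_pos (mul_pos habs habs) hcos]
  have hnormSq : 0 < Complex.normSq (a ^ 2) := Complex.normSq_pos.mpr ha2
  -- the two points in the upper half plane
  set τc : ℂ := ↑(lam / π) * (Complex.I * (a ^ 2)⁻¹) with hτc_def
  set σ : ℂ := ↑(π / lam) * (Complex.I * a ^ 2) with hσ_def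
  have himτ : 0 < τc.im := by
    have h : τc.im = lam / π * ((a ^ 2).re / Complex.normSq (a ^ 2)) := by
      simp [hτc_def, Complex.im_ofReal_mul, Complex.mul_im, Complex.inv_re]
    rw [h]
    exact mul_pos (div_pos hlam hπ) (div_pos hre2 hnormSq)
  have himσ : 0 < σ.im := by
    have h : σ.im = π / lam * (a ^ 2).re := by
      simp [hσ_def, Complex.im_ofReal_mul, Complex.mul_im]
    rw [h]
    exact mul_pos (div_pos hπ hlam) hre2
  have hτc0 : τc ≠ 0 := fun h => by simp [h] at himτ
  -- functional equation
  have hfe := jacobiTheta_S_smul ⟨τc, himτ⟩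
  rw [UpperHalfPlane.modular_S_smul] at hfe
  have hσeq : -(τc)⁻¹ = σ := by
    rw [hτc_def, hσ_def]
    push_cast
    field_simp
    ring_nf
    rw [Complex.I_sq]
  -- the square root
  set s : ℝ := Real.sqrt (lam / π) with hs_def
  have hs0 : 0 < s := Real.sqrt_pos.mpr (div_pos hlam hπ)
  set w : ℂ := ↑s * a⁻¹ with hw_def
  have hwre : 0 < w.re := by
    simp only [hw_def, Complex.re_ofReal_mul, Complex.inv_re]
    have : 0 < Complex.normSq a := Complex.normSq_pos.mpr ha
    positivity
  have hw2 : -Complex.I * τc = w ^ 2 := by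
    have h1 : (s : ℂ) ^ 2 = ((lam / π : ℝ) : ℂ) := by
      rw [← Complex.ofReal_pow, Real.sq_sqrt (div_pos hlam hπ).le]
    rw [hτc_def, hw_def, mul_pow, h1]
    field_simp
    ring_nf
    rw [Complex.I_sq]
    ring
  have hcpow : (-Complex.I * τc) ^ (1 / 2 : ℂ) = w := by
    rw [hw2, one_div]
    exact Complex.sq_cpow_two_inv hwre
  -- put functional equation in usable form
  have hfe' : jacobiTheta (-τc)⁻¹ = (-Complex.I * τc) ^ (1 / 2 : ℂ) * jacobiTheta τc := hfe
  rw [inv_neg, hσeq, hcpow] at hfe'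
  -- identify the exponents
  have hexp1 : ∀ n : ℕ, -(lam : ℂ) * ((n : ℂ) + 1) ^ 2 / a ^ 2
      = ↑π * Complex.I * ((n : ℂ) + 1) ^ 2 * τc := by
    intro n
    rw [hτc_def]
    push_cast
    field_simp
    ring_nf
    rw [Complex.I_sq]
  have hexp2 : ∀ n : ℕ, -(π : ℂ) ^ 2 * ((n : ℂ) + 1) ^ 2 * a ^ 2 / (lam : ℂ)
      = ↑π * Complex.I * ((n : ℂ) + 1) ^ 2 * σ := by
    intro n
    rw [hσ_def]
    push_cast
    field_simp
    ring_nf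
    rw [Complex.I_sq]
  refine ⟨?_, ?_, ?_⟩
  · simp only [hexp1]
    exact summable_aux himτ
  · simp only [hexp2]
    exact summable_aux himσ
  · simp only [hexp1, hexp2]
    have ht1 := jacobiTheta_eq_tsum_nat himτ
    have ht2 := jacobiTheta_eq_tsum_nat himσ
    rw [ht1, ht2] at hfe'
    have hsqrt : Real.sqrt (π / lam) = s⁻¹ := by
      rw [hs_def, ← Real.sqrt_inv, inv_div]
    rw [hsqrt]
    have hs0' : (s : ℂ) ≠ 0 := by exact_mod_cast hs0.ne'
    rw [hw_def] at hfe'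
    push_cast
    field_simp at hfe'
    have hst : (s : ℂ) * (↑s)⁻¹ = 1 := mul_inv_cancel₀ hs0'
    linear_combination (-(↑s : ℂ)⁻¹ / 2) * hfe' +
      (-((∑' n : ℕ, Complex.exp (↑π * Complex.I * ((n : ℂ) + 1) ^ 2 * τc)) + 1 / 2)) * hst
end

section
/- Let λ > 0 and let a be a nonzero complex number with |arg a| < π/4. Then ∑_{n=1}^∞ n² e^{−λn²/a²} = (√π · a³)/(4 λ^{3/2}) − (πa²/λ)^{5/2} · ∑_{k=1}^∞ (k² − λ/(2π²a²)) e^{−π²k²a²/λ}. -/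
open Real
open Complex hiding exp

-- summability helper
lemma summ_aux (c : ℝ) (hc : 0 < c) (k : ℕ) :
    Summable fun n : ℤ => (n : ℝ) ^ (2 * k) * Real.exp (-c * (n : ℝ) ^ 2) := by
  have hnat : Summable fun n : ℕ => (n : ℝ) ^ (2 * k) * Real.exp (-c * (n : ℝ) ^ 2) := by
    have hr : ‖Real.exp (-c)‖ < 1 := by
      rw [Real.norm_eq_abs, abs_of_pos (Real.exp_pos _)]
      exact Real.exp_lt_one_iff.mpr (by linarith)
    refine Summable.of_nonneg_of_le (fun n => by positivity)
      (fun n => ?_) (summable_pow_mul_geometric_of_norm_lt_one (2 * k) hr)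
    have : Real.exp (-c * (n : ℝ) ^ 2) ≤ Real.exp (-c) ^ n := by
      rw [← Real.exp_nat_mul]
      apply Real.exp_le_exp.mpr
      have h1 : (n : ℝ) ≤ (n : ℝ) ^ 2 := by
        exact_mod_cast Nat.cast_le.mpr (Nat.le_self_pow two_ne_zero n)
      nlinarith
    calc (n : ℝ) ^ (2 * k) * Real.exp (-c * (n : ℝ) ^ 2)
        ≤ (n : ℝ) ^ (2 * k) * Real.exp (-c) ^ n := by
          apply mul_le_mul_of_nonneg_left this (by positivity)
      _ = _ := rfl
  refine Summable.of_nat_of_neg (by exact_mod_cast hnat) ?_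
  convert hnat using 2 with n
  · rfl
  push_cast
  rw [pow_mul, pow_mul, neg_pow_two]

lemma norm_exp_aux (z : ℂ) (n : ℤ) :
    ‖Complex.exp (-(π:ℂ) * z * (n:ℂ) ^ 2)‖ = Real.exp (-(π * z.re) * (n:ℝ) ^ 2) := by
  rw [Complex.norm_exp]
  congr 1
  have : (-(π:ℂ) * z * (n:ℂ) ^ 2) = (((-π * (n:ℝ)^2 : ℝ)):ℂ) * z := by push_cast; ring
  rw [this, Complex.re_ofReal_mul]
  ring

lemma summ_exp {t : ℂ} (ht : 0 < t.re) :
    Summable fun n : ℤ => Complex.exp (-(π:ℂ) * t * (n:ℂ) ^ 2) := by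
  apply Summable.of_norm
  convert summ_aux (π * t.re) (by positivity) 0 using 2 with n
  rw [norm_exp_aux]
  norm_num

lemma summ_sq_exp {t : ℂ} (ht : 0 < t.re) :
    Summable fun n : ℤ => (n:ℂ) ^ 2 * Complex.exp (-(π:ℂ) * t * (n:ℂ) ^ 2) := by
  apply Summable.of_norm
  convert summ_aux (π * t.re) (by positivity) 1 using 2 with n
  rw [norm_mul, norm_exp_aux, norm_pow, Complex.norm_intCast, _root_.sq_abs]

lemma hasDerivAt_theta {t : ℂ} (ht : 0 < t.re) :
    HasDerivAt (fun z : ℂ => ∑' n : ℤ, Complex.exp (-(π:ℂ) * z * (n:ℂ) ^ 2))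
      (∑' n : ℤ, -(π:ℂ) * (n:ℂ) ^ 2 * Complex.exp (-(π:ℂ) * t * (n:ℂ) ^ 2)) t := by
  set ε := t.re / 2 with hε
  have hε0 : 0 < ε := by positivity
  refine hasDerivAt_tsum_of_isPreconnected (𝕜 := ℂ) (F := ℂ)
    (u := fun n : ℤ => π * (n:ℝ)^2 * Real.exp (-(π * ε) * (n:ℝ)^2))
    (g' := fun (n : ℤ) (z : ℂ) => -(π:ℂ) * (n:ℂ) ^ 2 * Complex.exp (-(π:ℂ) * z * (n:ℂ) ^ 2))
    (t := {z : ℂ | ε < z.re}) (y₀ := t) ?_ ?_ ?_ ?_ ?_ ?_ ?_ ?_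
  · have := (summ_aux (π * ε) (by positivity) 1).mul_left π
    convert this using 2 with n
    · rfl
    ring
  · exact isOpen_lt continuous_const Complex.continuous_re
  · exact (convex_halfSpace_re_gt ε).isPreconnected
  · intro n z hz
    have h1 : HasDerivAt (fun z : ℂ => -(π:ℂ) * z * (n:ℂ) ^ 2) (-(π:ℂ) * (n:ℂ) ^ 2) z := by
      simpa using ((hasDerivAt_id z).const_mul (-(π:ℂ))).mul_const ((n:ℂ) ^ 2)
    simpa [mul_comm] using h1.cexp
  · intro n z hz
    rw [norm_mul, norm_exp_aux, norm_mul, norm_neg, Complex.norm_real, Real.norm_eq_abs,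
      abs_of_pos pi_pos, norm_pow, Complex.norm_intCast, _root_.sq_abs]
    have hexp : Real.exp (-(π * z.re) * (n:ℝ) ^ 2) ≤ Real.exp (-(π * ε) * (n:ℝ) ^ 2) := by
      apply Real.exp_le_exp.mpr
      have hz' : ε ≤ z.re := le_of_lt hz
      nlinarith [mul_nonneg (mul_nonneg pi_pos.le (sq_nonneg (n:ℝ))) (sub_nonneg.mpr hz')]
    exact mul_le_mul_of_nonneg_left hexp (by positivity)
  · simpa [hε] using half_lt_self ht
  · exact summ_exp ht
  · simpa [hε] using half_lt_self ht

lemma key {t : ℂ} (ht : 0 < t.re) :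
    (2*(π:ℂ)) * ∑' n : ℤ, (n:ℂ)^2 * Complex.exp (-(π:ℂ) * t * (n:ℂ) ^ 2)
      = t ^ (-(3/2) : ℂ) * (∑' n : ℤ, Complex.exp (-(π:ℂ) * t⁻¹ * (n:ℂ) ^ 2))
        - 2*(π:ℂ) * t ^ (-(5/2) : ℂ) * ∑' n : ℤ, (n:ℂ)^2 * Complex.exp (-(π:ℂ) * t⁻¹ * (n:ℂ) ^ 2) := by
  have ht0 : t ≠ 0 := fun h => by simp [h] at ht
  have hns : 0 < Complex.normSq t := Complex.normSq_pos.mpr ht0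
  have hti : 0 < (t⁻¹).re := by rw [Complex.inv_re]; positivity
  set F : ℂ → ℂ := fun z => ∑' n : ℤ, Complex.exp (-(π:ℂ) * z * (n:ℂ) ^ 2) with hF
  -- functional equation
  have hFG : ∀ z : ℂ, 0 < z.re → F z = z ^ (-(1/2) : ℂ) * F z⁻¹ := by
    intro z hz
    have := Complex.tsum_exp_neg_mul_int_sq hz
    rw [hF]
    simp only
    rw [this, one_div, ← Complex.cpow_neg]
    congr 2 with n
  -- derivative of RHS
  have h1 : HasDerivAt (fun z : ℂ => z ^ (-(1/2) : ℂ))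
      ((-(1/2):ℂ) * t ^ ((-(1/2):ℂ) - 1)) t := by
    have := (hasDerivAt_id t).cpow_const (c := (-(1/2):ℂ))
      (Complex.mem_slitPlane_iff.mpr (Or.inl ht))
    simpa using this
  have h2 : HasDerivAt (fun z : ℂ => F z⁻¹)
      ((∑' n : ℤ, -(π:ℂ) * (n:ℂ) ^ 2 * Complex.exp (-(π:ℂ) * t⁻¹ * (n:ℂ) ^ 2)) * (-(t^2)⁻¹)) t :=
    (hasDerivAt_theta hti).comp t (hasDerivAt_inv ht0)
  have hG : HasDerivAt (fun z : ℂ => z ^ (-(1/2) : ℂ) * F z⁻¹)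
      ((-(1/2):ℂ) * t ^ ((-(1/2):ℂ) - 1) * F t⁻¹
        + t ^ (-(1/2) : ℂ) * ((∑' n : ℤ, -(π:ℂ) * (n:ℂ) ^ 2 * Complex.exp (-(π:ℂ) * t⁻¹ * (n:ℂ) ^ 2)) * (-(t^2)⁻¹))) t :=
    h1.mul h2
  have hFd : HasDerivAt F (∑' n : ℤ, -(π:ℂ) * (n:ℂ) ^ 2 * Complex.exp (-(π:ℂ) * t * (n:ℂ) ^ 2)) t :=
    hasDerivAt_theta ht
  -- F = G near t
  have heq : (fun z : ℂ => z ^ (-(1/2) : ℂ) * F z⁻¹) =ᶠ[nhds t] F := by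
    filter_upwards [(isOpen_lt continuous_const Complex.continuous_re).mem_nhds
      (show (0:ℝ) < t.re from ht)] with z hz
    exact (hFG z hz).symm
  have hG2 : HasDerivAt (fun z : ℂ => z ^ (-(1/2) : ℂ) * F z⁻¹)
      (∑' n : ℤ, -(π:ℂ) * (n:ℂ) ^ 2 * Complex.exp (-(π:ℂ) * t * (n:ℂ) ^ 2)) t :=
    hFd.congr_of_eventuallyEq heq
  have E1 := hG2.unique hG
  -- pull out -π from the tsums
  have hpull : ∀ s : ℂ, (∑' n : ℤ, -(π:ℂ) * (n:ℂ) ^ 2 * Complex.exp (-(π:ℂ) * s * (n:ℂ) ^ 2))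
      = (-(π:ℂ)) * ∑' n : ℤ, (n:ℂ) ^ 2 * Complex.exp (-(π:ℂ) * s * (n:ℂ) ^ 2) := by
    intro s
    rw [← tsum_mul_left]
    congr 1; funext n; ring
  rw [hpull, hpull] at E1
  -- cpow algebra
  have hc : t ^ (-(1/2) : ℂ) * (t^2)⁻¹ = t ^ (-(5/2) : ℂ) := by
    rw [show (-(5/2) : ℂ) = (-(1/2)) + (-2 : ℤ) by norm_num,
      Complex.cpow_add _ _ ht0, Complex.cpow_intCast]
    norm_num
  have hc2 : ((-(1/2):ℂ) - 1) = (-(3/2) : ℂ) := by norm_num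
  rw [hc2] at E1
  have hΦ : F t⁻¹ = ∑' n : ℤ, Complex.exp (-(π:ℂ) * t⁻¹ * (n:ℂ) ^ 2) := rfl
  rw [hΦ] at E1
  set A := ∑' n : ℤ, (n:ℂ)^2 * Complex.exp (-(π:ℂ) * t * (n:ℂ) ^ 2)
  set B := ∑' n : ℤ, (n:ℂ)^2 * Complex.exp (-(π:ℂ) * t⁻¹ * (n:ℂ) ^ 2)
  set Φ := ∑' n : ℤ, Complex.exp (-(π:ℂ) * t⁻¹ * (n:ℂ) ^ 2)
  linear_combination (-2 : ℂ) * E1 + (-2*(π:ℂ)*B) * hc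

lemma hasSum_int_even {f : ℤ → ℂ} {S : ℂ} (hf : HasSum f S) (h : ∀ n : ℤ, f (-n) = f n) :
    HasSum (fun n : ℕ => f ((n : ℤ) + 1)) ((S - f 0) / 2) := by
  have h1 := hf.nat_add_neg
  have h2 : HasSum (fun n : ℕ => 2 * f (n : ℤ)) (S + f 0) := by
    refine h1.congr_fun fun n => ?_
    rw [h n, two_mul]
  have h3 := (hasSum_nat_add_iff' (f := fun n : ℕ => 2 * f (n : ℤ)) 1).2 h2
  simp only [Finset.range_one, Finset.sum_singleton, Nat.cast_zero] at h3
  have h4 : S + f 0 - 2 * f 0 = S - f 0 := by ring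
  rw [h4] at h3
  have h5 := h3.div_const 2
  refine h5.congr_fun fun n => ?_
  push_cast
  ring_nf

lemma real_mul_cpow {r : ℝ} (hr : 0 < r) {w : ℂ} (hw : w ≠ 0) (s : ℂ) :
    ((r : ℂ) * w) ^ s = (r : ℂ) ^ s * w ^ s := by
  have hr0 : (r : ℂ) ≠ 0 := Complex.ofReal_ne_zero.mpr hr.ne'
  rw [Complex.cpow_def_of_ne_zero (mul_ne_zero hr0 hw),
    Complex.cpow_def_of_ne_zero hr0, Complex.cpow_def_of_ne_zero hw,
    Complex.log_ofReal_mul hr hw, add_mul, Complex.exp_add, Complex.ofReal_log hr.le]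

/-- For `λ > 0` and nonzero complex `a` with `|arg a| < π/4`,
`∑_{n≥1} n² e^{-λn²/a²} = √π a³/(4λ^{3/2}) - (πa²/λ)^{5/2} ∑_{k≥1}(k² - λ/(2π²a²))e^{-π²k²a²/λ}`. -/
theorem mathieu_gaussian_p_one (lam : ℝ) (hlam : 0 < lam) (a : ℂ) (ha : a ≠ 0)
    (harg : |a.arg| < π / 4) :
    ∑' n : ℕ, ((n : ℂ) + 1) ^ 2 * Complex.exp (-(lam : ℂ) * ((n : ℂ) + 1) ^ 2 / a ^ 2)
      = (Real.sqrt π : ℂ) * a ^ 3 / (4 * ((lam ^ ((3 : ℝ) / 2) : ℝ) : ℂ))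
        - ((π : ℂ) * a ^ 2 / (lam : ℂ)) ^ ((5 : ℂ) / 2) *
          ∑' k : ℕ, (((k : ℂ) + 1) ^ 2 - (lam : ℂ) / (2 * (π : ℂ) ^ 2 * a ^ 2)) *
            Complex.exp (-(π : ℂ) ^ 2 * ((k : ℂ) + 1) ^ 2 * a ^ 2 / (lam : ℂ)) := by
  have hπ0 : (0:ℝ) < π := pi_pos
  have hπc : (π:ℂ) ≠ 0 := Complex.ofReal_ne_zero.mpr Real.pi_ne_zero
  have hlamc : (lam:ℂ) ≠ 0 := Complex.ofReal_ne_zero.mpr hlam.ne'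
  have ha2 : a^2 ≠ 0 := pow_ne_zero 2 ha
  have habs : 0 < ‖a‖ := norm_pos_iff.mpr ha
  have hargs := abs_lt.mp harg
  -- re (a^2) > 0
  have hre : (a^2).re = ‖a‖^2 * Real.cos (2 * a.arg) := by
    have hcos : Real.cos a.arg = a.re / ‖a‖ := Complex.cos_arg ha
    have hsin : Real.sin a.arg = a.im / ‖a‖ := Complex.sin_arg a
    have h2 : Real.cos (2 * a.arg) = Real.cos a.arg ^ 2 - Real.sin a.arg ^ 2 := by
      rw [Real.cos_two_mul]
      nlinarith [Real.sin_sq_add_cos_sq a.arg]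
    rw [h2, hcos, hsin, sq a, Complex.mul_re]
    field_simp
  have hcos2 : 0 < Real.cos (2 * a.arg) := by
    refine Real.cos_pos_of_mem_Ioo ⟨by linarith [hargs.1], by linarith [hargs.2]⟩
  have hrea2 : 0 < (a^2).re := by rw [hre]; positivity
  have hinv2 : 0 < ((a^2)⁻¹).re := by
    rw [Complex.inv_re]
    have := Complex.normSq_pos.mpr ha2
    positivity
  set t : ℂ := (lam:ℂ) / ((π:ℂ) * a^2) with htdef
  have htre : t = ((lam/π : ℝ):ℂ) * (a^2)⁻¹ := by
    rw [htdef]; push_cast; field_simp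
  have ht : 0 < t.re := by
    rw [htre, Complex.re_ofReal_mul]
    have : 0 < lam / π := by positivity
    positivity
  have ht0 : t ≠ 0 := fun h => by simp [h] at ht
  have hti : 0 < (t⁻¹).re := by
    rw [Complex.inv_re]
    have := Complex.normSq_pos.mpr ht0
    positivity
  have hargt : t.arg ≠ π := by
    intro h
    have := Complex.arg_eq_pi_iff.mp h
    linarith [this.1]
  have htinv : t⁻¹ = (π:ℂ) * a^2 / lam := by
    rw [htdef]; field_simp
  -- the three ℤ-sums
  set A := ∑' n : ℤ, (n:ℂ)^2 * Complex.exp (-(π:ℂ) * t * (n:ℂ) ^ 2) with hAdef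
  set Φ := ∑' n : ℤ, Complex.exp (-(π:ℂ) * t⁻¹ * (n:ℂ) ^ 2) with hΦdef
  set B := ∑' n : ℤ, (n:ℂ)^2 * Complex.exp (-(π:ℂ) * t⁻¹ * (n:ℂ) ^ 2) with hBdef
  have E := key ht
  -- LHS
  have hAnat : HasSum (fun n : ℕ => ((n:ℂ)+1)^2 * Complex.exp (-(lam:ℂ) * ((n:ℂ)+1)^2 / a^2))
      (A / 2) := by
    have hAZ := (summ_sq_exp ht).hasSum
    have heven : ∀ n : ℤ, ((-n:ℤ):ℂ)^2 * Complex.exp (-(π:ℂ) * t * ((-n:ℤ):ℂ) ^ 2)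
        = (n:ℂ)^2 * Complex.exp (-(π:ℂ) * t * (n:ℂ) ^ 2) := by
      intro n; push_cast; ring_nf
    have h1 := hasSum_int_even hAZ heven
    simp only [Int.cast_zero, ne_eq, OfNat.ofNat_ne_zero, not_false_eq_true, zero_pow, zero_mul,
      sub_zero] at h1
    refine h1.congr_fun fun n => ?_
    push_cast
    have hmt : -(π:ℂ) * t = -(lam:ℂ) / a^2 := by
      rw [htdef]; field_simp
    have harg' : -(π:ℂ) * t * ((n:ℂ)+1)^2 = -(lam:ℂ) * ((n:ℂ)+1)^2 / a^2 := by
      rw [hmt]; ring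
    rw [harg']
  have hΦnat : HasSum (fun k : ℕ => Complex.exp (-(π:ℂ)^2 * ((k:ℂ)+1)^2 * a^2 / lam))
      ((Φ - 1) / 2) := by
    have hΦZ := (summ_exp hti).hasSum
    have heven : ∀ n : ℤ, Complex.exp (-(π:ℂ) * t⁻¹ * ((-n:ℤ):ℂ) ^ 2)
        = Complex.exp (-(π:ℂ) * t⁻¹ * (n:ℂ) ^ 2) := by
      intro n; push_cast; ring_nf
    have h1 := hasSum_int_even hΦZ heven
    simp only [Int.cast_zero, ne_eq, OfNat.ofNat_ne_zero, not_false_eq_true, zero_pow, mul_zero,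
      Complex.exp_zero] at h1
    refine h1.congr_fun fun k => ?_
    push_cast
    have harg' : -(π:ℂ) * t⁻¹ * ((k:ℂ)+1)^2 = -(π:ℂ)^2 * ((k:ℂ)+1)^2 * a^2 / lam := by
      rw [htinv]; ring
    rw [harg']
  have hBnat : HasSum (fun k : ℕ => ((k:ℂ)+1)^2 * Complex.exp (-(π:ℂ)^2 * ((k:ℂ)+1)^2 * a^2 / lam))
      (B / 2) := by
    have hBZ := (summ_sq_exp hti).hasSum
    have heven : ∀ n : ℤ, ((-n:ℤ):ℂ)^2 * Complex.exp (-(π:ℂ) * t⁻¹ * ((-n:ℤ):ℂ) ^ 2)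
        = (n:ℂ)^2 * Complex.exp (-(π:ℂ) * t⁻¹ * (n:ℂ) ^ 2) := by
      intro n; push_cast; ring_nf
    have h1 := hasSum_int_even hBZ heven
    simp only [Int.cast_zero, ne_eq, OfNat.ofNat_ne_zero, not_false_eq_true, zero_pow, zero_mul,
      sub_zero] at h1
    refine h1.congr_fun fun k => ?_
    push_cast
    have harg' : -(π:ℂ) * t⁻¹ * ((k:ℂ)+1)^2 = -(π:ℂ)^2 * ((k:ℂ)+1)^2 * a^2 / lam := by
      rw [htinv]; ring
    rw [harg']
  -- RHS inner sum
  set c : ℂ := (lam:ℂ) / (2 * (π:ℂ)^2 * a^2) with hcdef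
  have hRsum : HasSum (fun k : ℕ => (((k:ℂ)+1)^2 - c) *
      Complex.exp (-(π:ℂ)^2 * ((k:ℂ)+1)^2 * a^2 / lam)) (B/2 - c * ((Φ-1)/2)) := by
    have := hBnat.sub (hΦnat.mul_left c)
    refine this.congr_fun fun k => ?_
    ring
  rw [hAnat.tsum_eq, hRsum.tsum_eq]
  -- cpow facts
  have hloga : (Complex.log a * 2).im = 2 * a.arg := by
    simp [Complex.mul_im, Complex.log_im]
    ring
  have ha3 : (a^2 : ℂ) ^ ((3:ℂ)/2) = a^3 := by
    have hb1 : -π < (Complex.log a * (2:ℂ)).im := by rw [hloga]; linarith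
    have hb2 : (Complex.log a * (2:ℂ)).im ≤ π := by rw [hloga]; linarith
    have hmul := (Complex.cpow_mul (x := a) (y := (2:ℂ)) ((3:ℂ)/2) hb1 hb2).symm
    have h2 : a ^ ((2:ℂ)) = a^2 := by
      rw [show ((2:ℂ)) = ((2:ℕ):ℂ) by norm_num, Complex.cpow_natCast]
    have h3 : a ^ ((3:ℂ)) = a^3 := by
      rw [show ((3:ℂ)) = ((3:ℕ):ℂ) by norm_num, Complex.cpow_natCast]
    rw [h2] at hmul
    rw [hmul, show (2:ℂ) * ((3:ℂ)/2) = 3 by norm_num, h3]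
  have P5 : ((π:ℂ) * a^2 / (lam:ℂ)) ^ ((5:ℂ)/2) = t ^ (-(5/2) : ℂ) := by
    rw [← htinv, Complex.inv_cpow _ _ hargt, ← Complex.cpow_neg]
  have P3 : t ^ (-(3/2) : ℂ) = (π:ℂ) * (Real.sqrt π:ℂ) * a^3 / ((lam ^ ((3:ℝ)/2) : ℝ):ℂ) := by
    have h0 : t ^ (-(3/2) : ℂ) = (t⁻¹) ^ ((3:ℂ)/2) := by
      rw [Complex.inv_cpow _ _ hargt, ← Complex.cpow_neg]
    have h1 : t⁻¹ = ((π/lam : ℝ):ℂ) * a^2 := by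
      rw [htinv]; push_cast; field_simp
    rw [h0, h1, real_mul_cpow (by positivity) ha2, ha3]
    have h2 : ((π/lam : ℝ):ℂ) ^ ((3:ℂ)/2) = (((π/lam) ^ ((3:ℝ)/2) : ℝ) : ℂ) := by
      rw [Complex.ofReal_cpow (by positivity) ((3:ℝ)/2)]
      norm_num
    rw [h2]
    have h3 : (π/lam) ^ ((3:ℝ)/2) = π * Real.sqrt π / lam ^ ((3:ℝ)/2) := by
      rw [Real.div_rpow hπ0.le hlam.le]
      congr 1
      rw [show ((3:ℝ)/2) = 1 + 1/2 by norm_num, Real.rpow_add hπ0, Real.rpow_one,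
        ← Real.sqrt_eq_rpow]
    rw [h3]
    push_cast
    ring
  have hct : t ^ (-(5/2) : ℂ) * t = t ^ (-(3/2) : ℂ) := by
    calc t ^ (-(5/2) : ℂ) * t = t ^ (-(5/2) : ℂ) * t ^ (1:ℂ) := by rw [Complex.cpow_one]
      _ = t ^ ((-(5/2) : ℂ) + 1) := (Complex.cpow_add _ _ ht0).symm
      _ = t ^ (-(3/2) : ℂ) := by norm_num
  have hc : c = t / (2*(π:ℂ)) := by
    rw [hcdef, htdef, div_div]
    congr 1
    ring
  rw [P5, hc]
  have hLc0 : ((lam ^ ((3:ℝ)/2) : ℝ):ℂ) ≠ 0 :=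
    Complex.ofReal_ne_zero.mpr (Real.rpow_pos_of_pos hlam _).ne'
  rw [← hAdef, ← hΦdef, ← hBdef] at E
  have hK : (Real.sqrt π:ℂ) * a^3 / (4 * ((lam ^ ((3:ℝ)/2) : ℝ):ℂ)) = t ^ (-(3/2):ℂ) / (4*(π:ℂ)) := by
    rw [P3]
    field_simp
  set T5 := t ^ (-(5/2) : ℂ) with hT5
  set T3 := t ^ (-(3/2) : ℂ) with hT3
  rw [hK]
  rw [← hct] at E ⊢
  clear_value t A Φ B c T5 T3
  have E2 : A = (T5 * t * Φ - 2*(π:ℂ)*T5*B) / (2*(π:ℂ)) := by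
    rw [eq_div_iff (by simp [hπc] : (2*(π:ℂ)) ≠ 0)]
    linear_combination E
  rw [E2]
  field_simp
  have hππ : ((π:ℂ))⁻¹ ^ 2 * (π:ℂ) ^ 2 = 1 := by
    rw [← mul_pow, inv_mul_cancel₀ hπc, one_pow]
  linear_combination (0:ℂ) * hππ
end

section
/- Let p be a nonnegative integer and set c_j := (−2p)_{2j}/(2^{2j} j!) for 0 ≤ j ≤ p, where (x)_n = x(x+1)⋯(x+n−1) is the Pochhammer symbol. Then for every complex s with Re(s) > 2p − 1, Γ(1/2 + s/2)·Γ(1 + s/2)/Γ(1 − p + s/2) = ∑_{j=0}^p (−1)^j c_j Γ(s/2 + p + 1/2 − j). Equivalently, 2^{−s}√π·Γ(1+s)/Γ(1 − p + s/2) = ∑_{j=0}^p (−1)^j c_j Γ(s/2 + p + 1/2 − j). -/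
open Real Finset

noncomputable def Cc (p j : ℕ) : ℂ :=
  (ascPochhammer ℂ (2 * j)).eval (-(2 * (p : ℂ))) / (2 ^ (2 * j) * (j.factorial : ℂ))

lemma asc_eval_succ_left (n : ℕ) (x : ℂ) :
    (ascPochhammer ℂ (n + 1)).eval x = x * (ascPochhammer ℂ n).eval (x + 1) := by
  rw [ascPochhammer_succ_left]
  simp [Polynomial.eval_comp]

lemma Cc_zero (p : ℕ) : Cc p 0 = 1 := by simp [Cc]

lemma Cc_top (p : ℕ) : Cc p (p + 1) = 0 := by
  have h1 : (ascPochhammer ℂ (2 * p + 1)).eval (-(2 * (p : ℂ))) = 0 := by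
    rw [ascPochhammer_succ_eval]
    push_cast
    ring
  have h2 : 2 * (p + 1) = (2 * p + 1) + 1 := by ring
  rw [Cc, h2, ascPochhammer_succ_eval, h1]
  simp

lemma Cc_rec (p i : ℕ) :
    Cc (p + 1) (i + 1) = Cc p (i + 1) + (2 * p + 3 / 2 - (i + 1)) * Cc p i := by
  have h2 : 2 * (i + 1) = (2 * i + 1) + 1 := by ring
  have hfac : ((i + 1).factorial : ℂ) = (i + 1) * (i.factorial : ℂ) := by
    push_cast [Nat.factorial_succ]; ring
  have hA : (ascPochhammer ℂ (2 * (i + 1))).eval (-(2 * ((p : ℂ) + 1)))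
      = (-(2 * ((p : ℂ) + 1))) * (-(2 * (p : ℂ) + 1)) *
        (ascPochhammer ℂ (2 * i)).eval (-(2 * (p : ℂ))) := by
    rw [h2, asc_eval_succ_left, asc_eval_succ_left]
    ring_nf
  have hB : (ascPochhammer ℂ (2 * (i + 1))).eval (-(2 * (p : ℂ)))
      = (ascPochhammer ℂ (2 * i)).eval (-(2 * (p : ℂ))) *
        (-(2 * (p : ℂ)) + 2 * i) * (-(2 * (p : ℂ)) + 2 * i + 1) := by
    rw [h2, ascPochhammer_succ_eval, ascPochhammer_succ_eval]
    push_cast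
    ring
  have hpow : (2 : ℂ) ^ (2 * (i + 1)) = 4 * 2 ^ (2 * i) := by
    rw [h2, pow_succ, pow_succ]; ring
  have hd1 : ((2 : ℂ) ^ (2 * i)) ≠ 0 := pow_ne_zero _ two_ne_zero
  have hd2 : ((i.factorial : ℂ)) ≠ 0 := Nat.cast_ne_zero.mpr (Nat.factorial_ne_zero i)
  have hd3 : ((i : ℂ) + 1) ≠ 0 := Nat.cast_add_one_ne_zero i
  simp only [Cc, hpow, hfac]
  push_cast
  rw [hA, hB]
  field_simp
  ring

lemma key_sum (p : ℕ) (w : ℂ) :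
    ∑ j ∈ range (p + 1), (-1) ^ j * Cc p j * (ascPochhammer ℂ (p - j)).eval w
      = (ascPochhammer ℂ p).eval (w + 1 / 2 - p) := by
  induction p with
  | zero => simp [Cc]
  | succ p ih =>
    have hstep : ∑ j ∈ range (p + 1 + 1),
        (-1 : ℂ) ^ j * Cc (p + 1) j * (ascPochhammer ℂ (p + 1 - j)).eval w
        = (w - 1 / 2 - p) *
          ∑ j ∈ range (p + 1), (-1) ^ j * Cc p j * (ascPochhammer ℂ (p - j)).eval w := by
      rw [Finset.sum_range_succ']
      have expand : ∀ i ∈ range (p + 1),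
          (-1 : ℂ) ^ (i + 1) * Cc (p + 1) (i + 1) * (ascPochhammer ℂ (p + 1 - (i + 1))).eval w
          = (-1 : ℂ) ^ (i + 1) * Cc p (i + 1) * (ascPochhammer ℂ (p - i)).eval w
            + (-1 : ℂ) ^ i * Cc p i * (ascPochhammer ℂ (p - i)).eval w
              * (-(2 * (p : ℂ) + 3 / 2 - (i + 1))) := by
        intro i _
        have hind : p + 1 - (i + 1) = p - i := by omega
        rw [hind, Cc_rec]
        ring
      rw [Finset.sum_congr rfl expand, Finset.sum_add_distrib]
      have hA : ∑ i ∈ range (p + 1),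
            (-1 : ℂ) ^ (i + 1) * Cc p (i + 1) * (ascPochhammer ℂ (p - i)).eval w
          + (-1 : ℂ) ^ 0 * Cc (p + 1) 0 * (ascPochhammer ℂ (p + 1 - 0)).eval w
          = ∑ j ∈ range (p + 1),
            (-1 : ℂ) ^ j * Cc p j * ((ascPochhammer ℂ (p - j)).eval w * (w + ((p : ℂ) - j))) := by
        have h0 : (-1 : ℂ) ^ 0 * Cc (p + 1) 0 * (ascPochhammer ℂ (p + 1 - 0)).eval w
            = (-1 : ℂ) ^ 0 * Cc p 0 * (ascPochhammer ℂ (p + 1 - 0)).eval w := by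
          rw [Cc_zero, Cc_zero]
        rw [h0]
        have hshift : ∀ i ∈ range (p + 1),
            (-1 : ℂ) ^ (i + 1) * Cc p (i + 1) * (ascPochhammer ℂ (p - i)).eval w
            = (-1 : ℂ) ^ (i + 1) * Cc p (i + 1) * (ascPochhammer ℂ (p + 1 - (i + 1))).eval w := by
          intro i _
          have : p + 1 - (i + 1) = p - i := by omega
          rw [this]
        rw [Finset.sum_congr rfl hshift,
          ← Finset.sum_range_succ'
            (fun j => (-1 : ℂ) ^ j * Cc p j * (ascPochhammer ℂ (p + 1 - j)).eval w) (p + 1),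
          Finset.sum_range_succ]
        rw [Cc_top]
        simp only [mul_zero, zero_mul, add_zero]
        refine Finset.sum_congr rfl ?_
        intro j hj
        have hj' : j ≤ p := by simpa using Nat.lt_succ_iff.mp (Finset.mem_range.mp hj)
        have hind : p + 1 - j = (p - j) + 1 := by omega
        rw [hind, ascPochhammer_succ_eval]
        have hcast : ((p - j : ℕ) : ℂ) = (p : ℂ) - j := by
          push_cast [Nat.cast_sub hj']
          ring
        rw [hcast]
      rw [add_right_comm, hA, ← Finset.sum_add_distrib, Finset.mul_sum]
      refine Finset.sum_congr rfl ?_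
      intro j _
      ring
    rw [hstep, ih]
    have := asc_eval_succ_left p (w + 1 / 2 - (p + 1 : ℕ))
    rw [this]
    push_cast
    ring_nf

lemma Gamma_add_nat' (w : ℂ) (hw : 0 < w.re) (n : ℕ) :
    Complex.Gamma (w + n) = (ascPochhammer ℂ n).eval w * Complex.Gamma w := by
  induction n with
  | zero => simp
  | succ n ih =>
    have hre : 0 < (w + n).re := by
      simp only [Complex.add_re, Complex.natCast_re]
      positivity
    have hne : w + n ≠ 0 := by
      intro h
      rw [h] at hre
      simp at hre
    have hrw : w + ((n : ℂ) + 1) = (w + n) + 1 := by ring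
    push_cast
    rw [hrw, Complex.Gamma_add_one _ hne, ih, ascPochhammer_succ_eval]
    ring

/-- The terminating inverse-factorial expansion (3.5)–(3.6) of the paper:
for a nonnegative integer `p`, `c_j = (-2p)_{2j}/(2^{2j} j!)` and `Re s > 2p - 1`,
`Γ(1/2+s/2)Γ(1+s/2)/Γ(1-p+s/2) = ∑_{j=0}^p (-1)^j c_j Γ(s/2+p+1/2-j)`, equivalently
`2^{-s}√π Γ(1+s)/Γ(1-p+s/2) = ∑_{j=0}^p (-1)^j c_j Γ(s/2+p+1/2-j)`. -/
theorem gamma_quotient_terminating_expansion (p : ℕ)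
    (c : ℕ → ℝ)
    (hc : ∀ j, c j = (ascPochhammer ℝ (2 * j)).eval (-(2 * (p : ℝ)))
        / (2 ^ (2 * j) * (j.factorial : ℝ)))
    (s : ℂ) (hs : 2 * (p : ℝ) - 1 < s.re) :
    Complex.Gamma (1 / 2 + s / 2) * Complex.Gamma (1 + s / 2) / Complex.Gamma (1 - p + s / 2)
      = ∑ j ∈ range (p + 1), (-1) ^ j * (c j : ℂ) *
          Complex.Gamma (s / 2 + (p : ℂ) + 1 / 2 - j) ∧
    (2 : ℂ) ^ (-s) * (Real.sqrt π : ℂ) * Complex.Gamma (1 + s) / Complex.Gamma (1 - p + s / 2)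
      = ∑ j ∈ range (p + 1), (-1) ^ j * (c j : ℂ) *
          Complex.Gamma (s / 2 + (p : ℂ) + 1 / 2 - j) := by
  have hsre : (s / 2).re = s.re / 2 := by
    rw [show (2 : ℂ) = ((2 : ℝ) : ℂ) by norm_num, Complex.div_ofReal_re]
  -- cast of the coefficients
  have hcast : ∀ j, (c j : ℂ) = Cc p j := by
    intro j
    rw [hc j, Cc]
    push_cast
    congr 1
    rw [← ascPochhammer_map (algebraMap ℝ ℂ), Polynomial.eval_map]
    rw [show (-(2 * (p : ℂ))) = algebraMap ℝ ℂ (-(2 * (p : ℝ))) by push_cast; ring]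
    rw [Polynomial.eval₂_at_apply]
    rfl
  set w : ℂ := 1 / 2 + s / 2 with hw
  have hwre : (p : ℝ) < w.re := by
    simp only [hw, Complex.add_re, hsre]
    have : (1 / 2 : ℂ).re = 1 / 2 := by norm_num
    rw [this]
    linarith
  have hwpos : 0 < w.re := lt_of_le_of_lt (Nat.cast_nonneg p) hwre
  set w0 : ℂ := 1 - p + s / 2 with hw0
  have hw0pos : 0 < w0.re := by
    simp only [hw0, Complex.add_re, Complex.sub_re, Complex.one_re, Complex.natCast_re, hsre]
    linarith
  -- RHS rewriting
  have hrhs : ∑ j ∈ range (p + 1), (-1) ^ j * (c j : ℂ) *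
      Complex.Gamma (s / 2 + (p : ℂ) + 1 / 2 - j)
      = (ascPochhammer ℂ p).eval w0 * Complex.Gamma w := by
    have hterm : ∀ j ∈ range (p + 1),
        (-1 : ℂ) ^ j * (c j : ℂ) * Complex.Gamma (s / 2 + (p : ℂ) + 1 / 2 - j)
        = (-1) ^ j * Cc p j * (ascPochhammer ℂ (p - j)).eval w * Complex.Gamma w := by
      intro j hj
      have hj' : j ≤ p := Nat.lt_succ_iff.mp (Finset.mem_range.mp hj)
      have harg : s / 2 + (p : ℂ) + 1 / 2 - j = w + ((p - j : ℕ) : ℂ) := by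
        push_cast [Nat.cast_sub hj']
        rw [hw]
        ring
      rw [harg, Gamma_add_nat' w hwpos, hcast]
      ring
    rw [Finset.sum_congr rfl hterm, ← Finset.sum_mul, key_sum]
    congr 2
    rw [hw, hw0]
    ring
  have hGamma1 : Complex.Gamma (1 + s / 2) = (ascPochhammer ℂ p).eval w0 * Complex.Gamma w0 := by
    have harg : 1 + s / 2 = w0 + (p : ℂ) := by rw [hw0]; ring
    rw [harg, Gamma_add_nat' w0 hw0pos]
  have hne : Complex.Gamma w0 ≠ 0 := Complex.Gamma_ne_zero_of_re_pos hw0pos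
  have hfirst : Complex.Gamma (1 / 2 + s / 2) * Complex.Gamma (1 + s / 2) /
      Complex.Gamma (1 - p + s / 2)
      = ∑ j ∈ range (p + 1), (-1) ^ j * (c j : ℂ) *
          Complex.Gamma (s / 2 + (p : ℂ) + 1 / 2 - j) := by
    rw [hrhs, hGamma1]
    rw [show (1 : ℂ) - p + s / 2 = w0 from rfl, show (1 / 2 : ℂ) + s / 2 = w from rfl]
    field_simp
  refine ⟨hfirst, ?_⟩
  have hdup : Complex.Gamma w * Complex.Gamma (1 + s / 2)
      = (2 : ℂ) ^ (-s) * (Real.sqrt π : ℂ) * Complex.Gamma (1 + s) := by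
    have := Complex.Gamma_mul_Gamma_add_half w
    rw [show (1 : ℂ) - 2 * w = -s by rw [hw]; ring,
      show w + 1 / 2 = 1 + s / 2 by rw [hw]; ring,
      show 2 * w = 1 + s by rw [hw]; ring] at this
    rw [this]
    ring
  rw [← hfirst, show (1 / 2 : ℂ) + s / 2 = w from rfl, ← hdup]
end

section
/- Let m ≥ 1 and r ≥ 0 be integers, let p be an integer with m − p ≥ 1, and let λ be a real number. Then ∑_{n=0}^r ((m)_n (−λ)^n / n!) · (2m − 2p + 2n)_{2(r−n)} / (2^{2(r−n)} (r−n)!) = ((2m − 2p)_{2r} / (2^{2r} r!)) · ∑_{n=0}^r ((−r)_n (m)_n λ^n) / (n! (m−p)_n (m−p+1/2)_n). (This expresses the coefficient C_r of the paper as a terminating ₂F₂ hypergeometric sum.) -/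
open Real Finset

lemma asc_split (x : ℝ) (a b : ℕ) :
    (ascPochhammer ℝ (a + b)).eval x
      = (ascPochhammer ℝ a).eval x * (ascPochhammer ℝ b).eval (x + a) := by
  have := congrArg (Polynomial.eval x) (ascPochhammer_mul (S := ℝ) a b)
  simpa [Polynomial.eval_comp] using this.symm

lemma asc_dup (x : ℝ) (n : ℕ) :
    (ascPochhammer ℝ (2 * n)).eval (2 * x)
      = 4 ^ n * (ascPochhammer ℝ n).eval x * (ascPochhammer ℝ n).eval (x + 1 / 2) := by
  induction n with
  | zero => simp
  | succ k ih =>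
    have h2 : 2 * (k + 1) = 2 * k + 1 + 1 := by ring
    rw [h2, ascPochhammer_succ_eval, ascPochhammer_succ_eval, ascPochhammer_succ_eval,
      ascPochhammer_succ_eval, ih]
    push_cast
    ring

lemma asc_neg (r n : ℕ) (h : n ≤ r) :
    (ascPochhammer ℝ n).eval (-(r : ℝ)) * ((r - n).factorial : ℝ)
      = (-1) ^ n * (r.factorial : ℝ) := by
  induction n with
  | zero => simp
  | succ k ih =>
    have hk : k ≤ r := Nat.le_of_succ_le h
    have h2 : (-(r:ℝ) + k) = -(((r - k : ℕ)):ℝ) := by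
      rw [Nat.cast_sub hk]; ring
    have h3 : (((r - k).factorial : ℝ)) = ((r - k : ℕ) : ℝ) * (((r - (k+1)).factorial : ℝ)) := by
      rw [show r - k = (r - (k+1)) + 1 by omega, Nat.factorial_succ]
      push_cast
      ring
    have ihk := ih hk
    rw [h3] at ihk
    rw [ascPochhammer_succ_eval, h2]
    linear_combination (-1 : ℝ) * ihk

/-- The coefficient `C_r` of the paper as a terminating ₂F₂ sum (equation (4.10)):
for integers `m ≥ 1`, `r ≥ 0` and `p` with `m - p ≥ 1`, and real `λ`,
`∑_{n=0}^r ((m)_n(-λ)^n/n!) (2m-2p+2n)_{2(r-n)}/(2^{2(r-n)}(r-n)!)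
  = ((2m-2p)_{2r}/(2^{2r} r!)) ∑_{n=0}^r ((-r)_n(m)_n λ^n)/(n!(m-p)_n(m-p+1/2)_n)`. -/
theorem coefficient_Cr_as_2F2 (m : ℕ) (hm : 1 ≤ m) (p : ℤ) (hmp : 1 ≤ (m : ℤ) - p)
    (r : ℕ) (lam : ℝ) :
    ∑ n ∈ range (r + 1),
        ((ascPochhammer ℝ n).eval (m : ℝ) * (-lam) ^ n / (n.factorial : ℝ)) *
          ((ascPochhammer ℝ (2 * (r - n))).eval (2 * (m : ℝ) - 2 * (p : ℝ) + 2 * n)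
            / (2 ^ (2 * (r - n)) * ((r - n).factorial : ℝ)))
      = ((ascPochhammer ℝ (2 * r)).eval (2 * (m : ℝ) - 2 * (p : ℝ))
            / (2 ^ (2 * r) * (r.factorial : ℝ))) *
          ∑ n ∈ range (r + 1),
            ((ascPochhammer ℝ n).eval (-(r : ℝ)) * (ascPochhammer ℝ n).eval (m : ℝ) * lam ^ n)
              / ((n.factorial : ℝ) * (ascPochhammer ℝ n).eval ((m : ℝ) - (p : ℝ))
                  * (ascPochhammer ℝ n).eval ((m : ℝ) - (p : ℝ) + 1 / 2)) := by
  have hmp' : (0:ℝ) < (m : ℝ) - (p : ℝ) := by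
    have : (1:ℝ) ≤ (m:ℝ) - (p:ℝ) := by exact_mod_cast hmp
    linarith
  rw [Finset.mul_sum]
  refine Finset.sum_congr rfl fun n hn => ?_
  have hnr : n ≤ r := Nat.lt_succ_iff.mp (Finset.mem_range.mp hn)
  have hsplit : (ascPochhammer ℝ (2 * r)).eval (2 * (m : ℝ) - 2 * (p : ℝ))
      = (ascPochhammer ℝ (2 * n)).eval (2 * (m : ℝ) - 2 * (p : ℝ)) *
        (ascPochhammer ℝ (2 * (r - n))).eval (2 * (m : ℝ) - 2 * (p : ℝ) + 2 * n) := by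
    have h2r : 2 * r = 2 * n + 2 * (r - n) := by omega
    rw [h2r, asc_split]
    norm_num
  have hdup : (ascPochhammer ℝ (2 * n)).eval (2 * (m : ℝ) - 2 * (p : ℝ))
      = 4 ^ n * (ascPochhammer ℝ n).eval ((m : ℝ) - (p : ℝ)) *
        (ascPochhammer ℝ n).eval ((m : ℝ) - (p : ℝ) + 1 / 2) := by
    have := asc_dup ((m : ℝ) - (p : ℝ)) n
    rw [show 2 * ((m:ℝ) - (p:ℝ)) = 2 * (m:ℝ) - 2 * (p:ℝ) by ring] at this
    exact this
  have hneg := asc_neg r n hnr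
  have hP1 : (ascPochhammer ℝ n).eval ((m : ℝ) - (p : ℝ)) ≠ 0 :=
    ne_of_gt (ascPochhammer_pos n _ hmp')
  have hP2 : (ascPochhammer ℝ n).eval ((m : ℝ) - (p : ℝ) + 1/2) ≠ 0 :=
    ne_of_gt (ascPochhammer_pos n _ (by linarith))
  have hfn : ((n.factorial : ℝ)) ≠ 0 := by exact_mod_cast n.factorial_ne_zero
  have hfrn : (((r - n).factorial : ℝ)) ≠ 0 := by exact_mod_cast (r - n).factorial_ne_zero
  have hfr : ((r.factorial : ℝ)) ≠ 0 := by exact_mod_cast r.factorial_ne_zero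
  have hpow : (2:ℝ) ^ (2 * r) = 2 ^ (2 * n) * 2 ^ (2 * (r - n)) := by
    rw [← pow_add]; congr 1; omega
  have h4 : (4:ℝ) ^ n = 2 ^ (2 * n) := by
    rw [show (4:ℝ) = 2^2 by norm_num, ← pow_mul]
  set A := (ascPochhammer ℝ n).eval (m : ℝ) with hA
  set R := (ascPochhammer ℝ n).eval (-(r : ℝ)) with hRdef
  set P1 := (ascPochhammer ℝ n).eval ((m : ℝ) - (p : ℝ)) with hP1d
  set P2 := (ascPochhammer ℝ n).eval ((m : ℝ) - (p : ℝ) + 1/2) with hP2d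
  set Q := (ascPochhammer ℝ (2 * (r - n))).eval (2 * (m : ℝ) - 2 * (p : ℝ) + 2 * n) with hQ
  have hnl : (-lam) ^ n = (-1)^n * lam ^ n := by rw [neg_pow]
  have hR : R = (-1)^n * (r.factorial : ℝ) / ((r - n).factorial : ℝ) := by
    rw [eq_div_iff hfrn]; exact hneg
  rw [hsplit, hdup, hpow, h4, hnl, hR]
  have h2n : ((2:ℝ) ^ (2 * n)) ≠ 0 := by positivity
  have h2rn : ((2:ℝ) ^ (2 * (r - n))) ≠ 0 := by positivity
  field_simp
end
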